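/- Let E and F be real normed vector spaces, f : E → E Lipschitz with constant L_f, h : E → F Lipschitz with constant L_h, and K₁, K₂ : F → E continuous linear maps with a := (1 + ‖K₁‖ · L_h) · L_f < 1. Let (y_t) be a sequence in F, (d_t) a sequence in E with ‖d_t‖ ≤ δ for all t, and suppose the sequences (x_t), (x'_t) in E satisfy x_{t+1} = f(x_t) + K₁(y_t − h(f(x_t))) + d_t and x'_{t+1} = f(x'_t) + K₂(y_t − h(f(x'_t))), with residuals uniformly bounded: ‖y_t − h(f(x'_t))‖ ≤ R for all t. Then limsup_{t→∞} ‖x_t − x'_t‖ ≤ (‖K₁ − K₂‖ · R + δ) / (1 − a). -/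

import Mathlib

open Filter

/-- Theorem on Local Convergence to Oracle (concrete form): the augmented
client trajectory `x`, driven by the client gain `K₁` and a bounded
perturbation `d` of size `δ`, converges in steady state to the centralized
oracle trajectory `x'` (driven by the extracted oracle gain `K₂`) up to the
constant `(‖K₁ - K₂‖ * R + δ) / (1 - a)`, provided the contraction condition
`a = (1 + ‖K₁‖ * Lh) * Lf < 1` holds and the oracle residuals are bounded by `R`. -/
theorem local_convergence_to_oracle
    {E F : Type*} [NormedAddCommGroup E] [NormedSpace ℝ E]
    [NormedAddCommGroup F] [NormedSpace ℝ F]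
    (f : E → E) (h : E → F) (Lf Lh : ℝ) (hLf : 0 ≤ Lf) (hLh : 0 ≤ Lh)
    (hf : ∀ a b : E, ‖f a - f b‖ ≤ Lf * ‖a - b‖)
    (hh : ∀ a b : E, ‖h a - h b‖ ≤ Lh * ‖a - b‖)
    (K₁ K₂ : F →L[ℝ] E)
    (ha : (1 + ‖K₁‖ * Lh) * Lf < 1)
    (y : ℕ → F) (d : ℕ → E) (δ : ℝ) (hd : ∀ t, ‖d t‖ ≤ δ)
    (x x' : ℕ → E)
    (hx : ∀ t, x (t + 1) = f (x t) + K₁ (y t - h (f (x t))) + d t)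
    (hx' : ∀ t, x' (t + 1) = f (x' t) + K₂ (y t - h (f (x' t))))
    (R : ℝ) (hR : ∀ t, ‖y t - h (f (x' t))‖ ≤ R) :
    limsup (fun t => ‖x t - x' t‖) atTop ≤
      (‖K₁ - K₂‖ * R + δ) / (1 - (1 + ‖K₁‖ * Lh) * Lf) := by
  set a : ℝ := (1 + ‖K₁‖ * Lh) * Lf with ha_def
  set c : ℝ := ‖K₁ - K₂‖ * R + δ with hc_def
  have ha0 : 0 ≤ a := by positivity
  have ha1 : (0:ℝ) < 1 - a := by linarith
  have hR0 : 0 ≤ R := le_trans (norm_nonneg _) (hR 0)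
  have hδ0 : 0 ≤ δ := le_trans (norm_nonneg _) (hd 0)
  have hc0 : 0 ≤ c := by positivity
  set e : ℕ → ℝ := fun t => ‖x t - x' t‖ with he_def
  -- one-step recursion bound
  have step : ∀ t, e (t + 1) ≤ a * e t + c := by
    intro t
    have key : x (t + 1) - x' (t + 1)
        = (f (x t) - f (x' t)) - K₁ (h (f (x t)) - h (f (x' t)))
          + (K₁ - K₂) (y t - h (f (x' t))) + d t := by
      rw [hx t, hx' t]
      simp only [map_sub, ContinuousLinearMap.sub_apply]
      abel
    have h1 : ‖f (x t) - f (x' t)‖ ≤ Lf * e t := hf _ _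
    have h2 : ‖K₁ (h (f (x t)) - h (f (x' t)))‖ ≤ ‖K₁‖ * (Lh * (Lf * e t)) := by
      calc ‖K₁ (h (f (x t)) - h (f (x' t)))‖
          ≤ ‖K₁‖ * ‖h (f (x t)) - h (f (x' t))‖ := K₁.le_opNorm _
        _ ≤ ‖K₁‖ * (Lh * ‖f (x t) - f (x' t)‖) := by
            exact mul_le_mul_of_nonneg_left (hh _ _) (norm_nonneg _)
        _ ≤ ‖K₁‖ * (Lh * (Lf * e t)) := by
            have := mul_le_mul_of_nonneg_left h1 hLh
            exact mul_le_mul_of_nonneg_left this (norm_nonneg _)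
    have h3 : ‖(K₁ - K₂) (y t - h (f (x' t)))‖ ≤ ‖K₁ - K₂‖ * R := by
      calc ‖(K₁ - K₂) (y t - h (f (x' t)))‖
          ≤ ‖K₁ - K₂‖ * ‖y t - h (f (x' t))‖ := (K₁ - K₂).le_opNorm _
        _ ≤ ‖K₁ - K₂‖ * R := mul_le_mul_of_nonneg_left (hR t) (norm_nonneg _)
    calc e (t + 1) = ‖(f (x t) - f (x' t)) - K₁ (h (f (x t)) - h (f (x' t)))
          + (K₁ - K₂) (y t - h (f (x' t))) + d t‖ := by rw [he_def]; simp [key]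
      _ ≤ ‖(f (x t) - f (x' t)) - K₁ (h (f (x t)) - h (f (x' t)))
          + (K₁ - K₂) (y t - h (f (x' t)))‖ + ‖d t‖ := norm_add_le _ _
      _ ≤ ‖(f (x t) - f (x' t)) - K₁ (h (f (x t)) - h (f (x' t)))‖
          + ‖(K₁ - K₂) (y t - h (f (x' t)))‖ + ‖d t‖ := by
            gcongr; exact norm_add_le _ _
      _ ≤ (‖f (x t) - f (x' t)‖ + ‖K₁ (h (f (x t)) - h (f (x' t)))‖)
          + ‖(K₁ - K₂) (y t - h (f (x' t)))‖ + ‖d t‖ := by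
            gcongr; exact norm_sub_le _ _
      _ ≤ (Lf * e t + ‖K₁‖ * (Lh * (Lf * e t))) + ‖K₁ - K₂‖ * R + δ := by
            exact add_le_add (add_le_add (add_le_add h1 h2) h3) (hd t)
      _ = a * e t + c := by rw [ha_def, hc_def]; ring
  -- iterate: e t ≤ a^t * e 0 + c / (1 - a)
  have bound : ∀ t, e t ≤ a ^ t * e 0 + c / (1 - a) := by
    intro t
    induction t with
    | zero =>
        have h0 : 0 ≤ c / (1 - a) := by positivity
        simp only [pow_zero, one_mul]
        linarith
    | succ n ih =>
        calc e (n + 1) ≤ a * e n + c := step n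
          _ ≤ a * (a ^ n * e 0 + c / (1 - a)) + c :=
              add_le_add_left (mul_le_mul_of_nonneg_left ih ha0) c
          _ = a ^ (n + 1) * e 0 + c / (1 - a) := by
              field_simp
              ring
  -- pass to the limsup
  have hlt : a < 1 := by linarith
  have hlim : Tendsto (fun t => a ^ t * e 0 + c / (1 - a)) atTop
      (nhds (0 * e 0 + c / (1 - a))) :=
    ((tendsto_pow_atTop_nhds_zero_of_lt_one ha0 hlt).mul_const (e 0)).add_const _
  rw [zero_mul, zero_add] at hlim
  calc limsup e atTop
      ≤ limsup (fun t => a ^ t * e 0 + c / (1 - a)) atTop := by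
        refine limsup_le_limsup (Eventually.of_forall bound) ?_ ?_
        · exact isCoboundedUnder_le_of_le atTop (fun t => norm_nonneg _)
        · exact hlim.isBoundedUnder_le
    _ = c / (1 - a) := hlim.limsup_eq
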